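/- Let U be circulant implementing convolution with kernel u and let Σ(U) have entries [Σ(U)]_{ij} = (1/2)(1 − arccos(⟨u_i,u_j⟩/(‖u_i‖‖u_j‖))/π)⟨u_i,u_j⟩ where u_i are rows of U. Then Σ(U) is also circulant and Hermitian (symmetric), and hence is diagonalized by the discrete Fourier basis. -/

import Mathlib

open Matrix Finset

/-- The (unnormalized) DFT matrix `F_{jk} = e^{i 2π j k / n}`. -/
noncomputable def dftMatrix (n : ℕ) : Matrix (Fin n) (Fin n) ℂ :=
  fun j k => Complex.exp (Complex.I * 2 * Real.pi * (j.val : ℂ) * (k.val : ℂ) / (n : ℂ))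

lemma dft_pow (n : ℕ) [NeZero n] (j k : Fin n) :
    dftMatrix n j k = (Complex.exp (2 * Real.pi * Complex.I / n)) ^ (j.val * k.val) := by
  rw [← Complex.exp_nat_mul, dftMatrix]
  congr 1
  push_cast
  ring

lemma circ_diag (n : ℕ) [NeZero n] (w : Fin n → ℂ) :
    dftMatrix n * Matrix.circulant w =
      Matrix.diagonal (fun j : Fin n => ∑ m, w m *
        (Complex.exp (2 * Real.pi * Complex.I / n)) ^ (j.val * m.val)) * dftMatrix n := by
  set ζ : ℂ := Complex.exp (2 * Real.pi * Complex.I / n) with hζdef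
  have hζ : IsPrimitiveRoot ζ n := Complex.isPrimitiveRoot_exp n (NeZero.ne n)
  have hpow : ∀ a : ℕ, ζ ^ a = ζ ^ (a % n) := by
    intro a
    conv_lhs => rw [← Nat.div_add_mod a n]
    rw [pow_add, pow_mul, hζ.pow_eq_one, one_pow, one_mul]
  ext j k
  rw [Matrix.mul_apply, Matrix.diagonal_mul]
  simp only [Matrix.circulant_apply, dft_pow, Finset.sum_mul]
  refine Fintype.sum_equiv (Equiv.subRight k) _ _ fun m => ?_
  simp only [Equiv.subRight_apply]
  have h2 : m.val = ((m - k).val + k.val) % n := by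
    conv_lhs => rw [← sub_add_cancel m k]
    rw [Fin.val_add]
  have key : (ζ : ℂ) ^ (j.val * m.val) = ζ ^ (j.val * (m - k).val + j.val * k.val) := by
    rw [hpow (j.val * m.val), hpow (j.val * (m - k).val + j.val * k.val)]
    have : j.val * m.val ≡ j.val * (m - k).val + j.val * k.val [MOD n] := by
      rw [← mul_add, h2]
      exact (Nat.mod_modEq _ n).mul_left j.val
    exact congrArg _ this
  rw [key, pow_add]
  ring

lemma dft_det_ne_zero (n : ℕ) [NeZero n] : (dftMatrix n).det ≠ 0 := by
  set ζ : ℂ := Complex.exp (2 * Real.pi * Complex.I / n) with hζdef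
  have hζ : IsPrimitiveRoot ζ n := Complex.isPrimitiveRoot_exp n (NeZero.ne n)
  have hvd : dftMatrix n = Matrix.vandermonde (fun j : Fin n => ζ ^ (j.val)) := by
    ext j k
    rw [dft_pow, Matrix.vandermonde_apply, ← pow_mul]
  rw [hvd]
  refine Matrix.det_vandermonde_ne_zero_iff.2 fun a b hab => ?_
  exact Fin.ext (hζ.pow_inj a.isLt b.isLt hab)

/-- For a circulant `U` with kernel `u`, the matrix `Σ(U)` with entries
`(1/2)(1 - arccos(⟨u_i,u_j⟩/(‖u_i‖‖u_j‖))/π)⟨u_i,u_j⟩` (rows `u_i` of `U`) is again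
circulant and symmetric, hence diagonalized by the discrete Fourier basis. -/
theorem stmt_17 (n : ℕ) [NeZero n] (u : Fin n → ℝ) (hu : u ≠ 0) :
    let U : Matrix (Fin n) (Fin n) ℝ := Matrix.circulant u
    let K : Matrix (Fin n) (Fin n) ℝ := fun i j =>
      (1 / 2) *
        (1 - Real.arccos ((∑ l, U i l * U j l) /
            (Real.sqrt (∑ l, U i l ^ 2) * Real.sqrt (∑ l, U j l ^ 2))) / Real.pi) *
        (∑ l, U i l * U j l)
    (∃ w : Fin n → ℝ, K = Matrix.circulant w) ∧ K.IsSymm ∧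
      ∃ d : Fin n → ℂ,
        K.map (fun x : ℝ => (x : ℂ)) = (dftMatrix n)⁻¹ * Matrix.diagonal d * dftMatrix n := by
  intro U K
  have hS : ∀ i j : Fin n, (∑ l, U i l * U j l) = ∑ l, u ((i - j) - l) * u (0 - l) := by
    intro i j
    refine Fintype.sum_equiv (Equiv.subRight j) _ _ fun l => ?_
    simp only [Equiv.subRight_apply, U, Matrix.circulant_apply]
    have e1 : (i - j) - (l - j) = i - l := sub_sub_sub_cancel_right i l j
    have e2 : (0 : Fin n) - (l - j) = j - l := by rw [zero_sub, neg_sub]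
    rw [e1, e2]
  have hN : ∀ i : Fin n, (∑ l, U i l ^ 2) = ∑ l, u (0 - l) ^ 2 := by
    intro i
    refine Fintype.sum_equiv (Equiv.subRight i) _ _ fun l => ?_
    simp only [Equiv.subRight_apply, U, Matrix.circulant_apply]
    have e2 : (0 : Fin n) - (l - i) = i - l := by rw [zero_sub, neg_sub]
    rw [e2]
  set w : Fin n → ℝ := fun k =>
    (1 / 2) *
      (1 - Real.arccos ((∑ l, u (k - l) * u (0 - l)) /
          (Real.sqrt (∑ l, u (0 - l) ^ 2) * Real.sqrt (∑ l, u (0 - l) ^ 2))) / Real.pi) *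
      (∑ l, u (k - l) * u (0 - l)) with hw
  have hKw : K = Matrix.circulant w := by
    ext i j
    show K i j = w (i - j)
    simp only [K, hw]
    rw [hS i j, hN i, hN j]
  refine ⟨⟨w, hKw⟩, ?_, ?_⟩
  · ext i j
    show K j i = K i j
    have h1 : (∑ l, U j l * U i l) = ∑ l, U i l * U j l :=
      Finset.sum_congr rfl fun l _ => mul_comm _ _
    simp only [K]
    rw [h1, mul_comm (Real.sqrt (∑ l, U j l ^ 2))]
  · set ζ : ℂ := Complex.exp (2 * Real.pi * Complex.I / n) with hζdef
    refine ⟨fun j => ∑ m, ((w m : ℂ)) * ζ ^ (j.val * m.val), ?_⟩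
    have hdet : IsUnit (dftMatrix n).det := isUnit_iff_ne_zero.2 (dft_det_ne_zero n)
    have hmap : K.map (fun x : ℝ => (x : ℂ)) = Matrix.circulant (fun i => ((w i : ℂ))) := by
      rw [hKw, Matrix.map_circulant]
    rw [hmap]
    have h := circ_diag n (fun i => ((w i : ℂ)))
    calc Matrix.circulant (fun i => ((w i : ℂ)))
        = (dftMatrix n)⁻¹ * dftMatrix n * Matrix.circulant (fun i => ((w i : ℂ))) := by
          rw [Matrix.nonsing_inv_mul _ hdet, one_mul]
      _ = (dftMatrix n)⁻¹ * (dftMatrix n * Matrix.circulant (fun i => ((w i : ℂ)))) := by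
          rw [Matrix.mul_assoc]
      _ = (dftMatrix n)⁻¹ * (Matrix.diagonal (fun j => ∑ m, ((w m : ℂ)) * ζ ^ (j.val * m.val)) *
            dftMatrix n) := by rw [h]
      _ = _ := by rw [← Matrix.mul_assoc]
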